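/- Let p be an odd prime and let ζ ∈ ℤ_p be a primitive (p−1)-st root of unity. In V := ℚ_p[X]/(X^p) with x the class of X, set s_i := 1 − Σ_{m=0}^{p−1} C(ζ^i, m)(−x)^m (the truncation mod X^p of 1 − (1−x)^{ζ^i}). Then for every integer n with 1 ≤ n ≤ p−1, the coefficient c ∈ ℚ_p of x^{p−1} in Σ_{i=0}^{p−2} (s_i)^n lies in ℤ_p and satisfies c ≡ −1 (mod p·ℤ_p), i.e. |c + 1|_p ≤ 1/p. (Equivalently, the eigenspace projection π_0 = (1/(p−1))Σ_i ψ_{ζ^i} satisfies π_0(x^n) ≡ x^{p−1} mod p for 1 ≤ n ≤ p−1.) -/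

import Mathlib

open Polynomial Finset

noncomputable def pbinom (p : ℕ) [Fact p.Prime] (y : ℚ_[p]) (n : ℕ) : ℚ_[p] :=
  (descPochhammer ℚ_[p] n).eval y / (n.factorial : ℚ_[p])

noncomputable abbrev TruncV (p : ℕ) [Fact p.Prime] : Type :=
  Polynomial ℚ_[p] ⧸ Ideal.span {(Polynomial.X : Polynomial ℚ_[p]) ^ p}

noncomputable def xV (p : ℕ) [Fact p.Prime] : TruncV p :=
  Ideal.Quotient.mk _ Polynomial.X

/-- `s_i = 1 - (1-x)^{ζ^i}` truncated mod `X^p`. -/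
noncomputable def sElt (p : ℕ) [Fact p.Prime] (ζ : ℤ_[p]) (i : ℕ) : TruncV p :=
  1 - ∑ m ∈ Finset.range p, pbinom p ((ζ : ℚ_[p]) ^ i) m • (-xV p) ^ m

section Aux
variable {p : ℕ} [Fact p.Prime]

lemma pbinom_zero (y : ℚ_[p]) : pbinom p y 0 = 1 := by simp [pbinom]

lemma pbinom_zero_left {m : ℕ} (hm : m ≠ 0) : pbinom p 0 m = 0 := by
  simp [pbinom, descPochhammer_eval_zero, hm]

lemma pbinom_eq_choose (y : ℚ_[p]) (n : ℕ) : pbinom p y n = Ring.choose y n := by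
  have h := Ring.descPochhammer_eq_factorial_smul_choose (R := ℚ_[p]) y n
  rw [← aeval_eq_smeval, aeval_def, eval₂_eq_eval_map,
    descPochhammer_map (algebraMap ℤ ℚ_[p])] at h
  rw [pbinom, h, nsmul_eq_mul]
  rw [mul_comm, mul_div_assoc, div_self (by exact_mod_cast n.factorial_ne_zero), mul_one]

lemma pbinom_add (a b : ℚ_[p]) (k : ℕ) :
    pbinom p (a + b) k = ∑ ij ∈ antidiagonal k, pbinom p a ij.1 * pbinom p b ij.2 := by
  simp only [pbinom_eq_choose]
  exact Ring.add_choose_eq k (Commute.all a b)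

noncomputable def Epoly (p : ℕ) [Fact p.Prime] (t : ℚ_[p]) : (ℚ_[p])[X] :=
  ∑ m ∈ range p, C ((-1) ^ m * pbinom p t m) * X ^ m

lemma Epoly_coeff (t : ℚ_[p]) (k : ℕ) :
    (Epoly p t).coeff k = if k < p then (-1) ^ k * pbinom p t k else 0 := by
  rw [Epoly, finset_sum_coeff]
  simp only [coeff_C_mul, coeff_X_pow, mul_ite, mul_one, mul_zero]
  rw [Finset.sum_ite_eq (range p) k (fun m => (-1) ^ m * pbinom p t m)]
  simp [Finset.mem_range]

lemma Epoly_zero : Epoly p 0 = 1 := by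
  ext k
  rw [Epoly_coeff, coeff_one]
  rcases Nat.eq_zero_or_pos k with hk | hk
  · subst hk
    simp [pbinom_zero, (Fact.out : p.Prime).pos]
  · have : k ≠ 0 := hk.ne'
    simp only [this, if_false]
    split <;> simp [pbinom_zero_left this]

end Aux
section Aux2
variable {p : ℕ} [Fact p.Prime]

noncomputable def mkq (p : ℕ) [Fact p.Prime] :
    (ℚ_[p])[X] →+* TruncV p :=
  Ideal.Quotient.mk (Ideal.span {(X : (ℚ_[p])[X]) ^ p})

lemma mkq_eq_iff {f g : (ℚ_[p])[X]} :
    mkq p f = mkq p g ↔ (X : (ℚ_[p])[X]) ^ p ∣ f - g := by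
  rw [mkq, Ideal.Quotient.eq, Ideal.mem_span_singleton]

noncomputable def mkE (p : ℕ) [Fact p.Prime] (t : ℚ_[p]) : TruncV p := mkq p (Epoly p t)

lemma Epoly_mul_coeff (a b : ℚ_[p]) {d : ℕ} (hd : d < p) :
    (Epoly p a * Epoly p b).coeff d = (Epoly p (a + b)).coeff d := by
  rw [coeff_mul, Epoly_coeff, if_pos hd, pbinom_add, Finset.mul_sum]
  refine Finset.sum_congr rfl ?_
  intro ij hij
  have h := Finset.HasAntidiagonal.mem_antidiagonal.mp hij
  rw [Epoly_coeff, Epoly_coeff, if_pos (by omega), if_pos (by omega), ← h, pow_add]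
  ring

lemma mkE_mul (a b : ℚ_[p]) : mkE p a * mkE p b = mkE p (a + b) := by
  rw [mkE, mkE, mkE, ← map_mul, mkq_eq_iff, X_pow_dvd_iff]
  intro d hd
  rw [coeff_sub, Epoly_mul_coeff a b hd, sub_self]

lemma mkE_zero : mkE p 0 = 1 := by rw [mkE, Epoly_zero, map_one]

lemma mkE_pow (t : ℚ_[p]) (j : ℕ) : (mkE p t) ^ j = mkE p ((j : ℚ_[p]) * t) := by
  induction j with
  | zero => simp [mkE_zero]
  | succ j ih =>
    rw [pow_succ, ih, mkE_mul]
    push_cast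
    ring_nf

lemma xV_eq : xV p = mkq p X := rfl

set_option synthInstance.maxHeartbeats 1000000 in
lemma sElt_eq (ζ : ℤ_[p]) (i : ℕ) :
    sElt p ζ i = 1 - mkE p ((ζ : ℚ_[p]) ^ i) := by
  rw [sElt, mkE, Epoly, map_sum]
  congr 1
  refine Finset.sum_congr rfl fun m _ => ?_
  have h1 : (-xV p) ^ m = mkq p ((-1) ^ m * X ^ m) := by
    rw [xV_eq, ← map_neg, ← map_pow]
    congr 1
    rw [neg_pow]
  rw [h1]
  have h2 : ∀ (a : ℚ_[p]) (f : (ℚ_[p])[X]), a • mkq p f = mkq p (a • f) := fun a f => rfl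
  rw [h2]
  congr 1
  rw [smul_eq_C_mul, ← C_1, ← C_neg, ← C_pow, ← mul_assoc, ← C_mul,
    mul_comm (pbinom p ((ζ : ℚ_[p]) ^ i) m)]

end Aux2
section Aux3
variable {p : ℕ} [Fact p.Prime] (ζ : ℤ_[p])
  (hζ : ζ ^ (p - 1) = 1) (hord : orderOf ζ = p - 1)

include hζ hord in
lemma Szeta (m : ℕ) :
    ∑ i ∈ range (p - 1), ((ζ : ℚ_[p]) ^ i) ^ m
      = if (p - 1) ∣ m then ((p - 1 : ℕ) : ℚ_[p]) else 0 := by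
  have hrw : ∀ i : ℕ, ((ζ : ℚ_[p]) ^ i) ^ m = ((ζ : ℚ_[p]) ^ m) ^ i := fun i => by
    rw [← pow_mul, ← pow_mul, mul_comm]
  simp only [hrw]
  by_cases hd : (p - 1) ∣ m
  · rw [if_pos hd]
    obtain ⟨k, rfl⟩ := hd
    have h1 : (ζ : ℚ_[p]) ^ ((p - 1) * k) = 1 := by
      rw [pow_mul]
      rw_mod_cast [hζ]
      exact one_pow k
    simp [h1]
  · rw [if_neg hd]
    have hne : (ζ : ℚ_[p]) ^ m ≠ 1 := by
      intro h
      have : ζ ^ m = 1 := by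
        apply Subtype.coe_injective
        push_cast
        exact h
      exact hd (hord ▸ orderOf_dvd_of_pow_eq_one this)
    rw [geom_sum_eq hne]
    have : ((ζ : ℚ_[p]) ^ m) ^ (p - 1) = 1 := by
      rw [← pow_mul, mul_comm, pow_mul]
      rw_mod_cast [hζ]
      exact one_pow m
    rw [this, sub_self, zero_div]

include hζ hord in
lemma sum_pbinom (j : ℕ) {k : ℕ} (hk : k ≤ p - 1) :
    ∑ i ∈ range (p - 1), pbinom p ((j : ℚ_[p]) * (ζ : ℚ_[p]) ^ i) k
      = if k = 0 then ((p - 1 : ℕ) : ℚ_[p])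
        else if k = p - 1 then ((p - 1 : ℕ) : ℚ_[p]) * (j : ℚ_[p]) ^ (p - 1) / ((p - 1).factorial : ℚ_[p])
        else 0 := by
  have hp2 : 2 ≤ p := (Fact.out : p.Prime).two_le
  rcases Nat.eq_zero_or_pos k with rfl | hk0
  · simp [pbinom_zero]
  have hkne : k ≠ 0 := hk0.ne'
  rw [if_neg hkne]
  simp only [pbinom, ← Finset.sum_div]
  have heval : ∀ i ∈ range (p - 1),
      (descPochhammer ℚ_[p] k).eval ((j : ℚ_[p]) * (ζ : ℚ_[p]) ^ i)
        = ∑ m ∈ range (k + 1),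
            (descPochhammer ℚ_[p] k).coeff m * ((j : ℚ_[p]) ^ m * ((ζ : ℚ_[p]) ^ i) ^ m) := by
    intro i _
    rw [eval_eq_sum_range, descPochhammer_natDegree]
    exact Finset.sum_congr rfl fun m _ => by rw [mul_pow]
  rw [Finset.sum_congr rfl heval, Finset.sum_comm]
  have hinner : ∀ m ∈ range (k + 1),
      (∑ i ∈ range (p - 1),
        (descPochhammer ℚ_[p] k).coeff m * ((j : ℚ_[p]) ^ m * ((ζ : ℚ_[p]) ^ i) ^ m))
      = (descPochhammer ℚ_[p] k).coeff m * (j : ℚ_[p]) ^ m *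
          (if (p - 1) ∣ m then ((p - 1 : ℕ) : ℚ_[p]) else 0) := by
    intro m _
    rw [← Finset.mul_sum, ← Finset.mul_sum, Szeta ζ hζ hord m, mul_assoc]
  rw [Finset.sum_congr rfl hinner]
  have hcoeff0 : (descPochhammer ℚ_[p] k).coeff 0 = 0 := by
    rw [coeff_zero_eq_eval_zero]
    simp [descPochhammer_eval_zero, hkne]
  by_cases hktop : k = p - 1
  · subst hktop
    rw [if_pos rfl]
    rw [Finset.sum_eq_single (p - 1)]
    · rw [if_pos dvd_rfl]
      have hmonic : (descPochhammer ℚ_[p] (p - 1)).coeff (p - 1) = 1 := by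
        have h := monic_descPochhammer ℚ_[p] (p - 1)
        have hd := descPochhammer_natDegree (R := ℚ_[p]) (p - 1)
        rw [Monic, leadingCoeff, hd] at h
        exact h
      rw [hmonic, one_mul, mul_comm]
    · intro m hm hmne
      rw [mem_range] at hm
      rcases Nat.eq_zero_or_pos m with rfl | hm0
      · rw [hcoeff0, zero_mul, zero_mul]
      · rw [if_neg, mul_zero]
        intro hdvd
        have := Nat.le_of_dvd hm0 hdvd
        omega
    · intro h
      exfalso
      exact h (mem_range.mpr (by omega))
  · rw [if_neg hktop]
    have hzero : ∀ m ∈ range (k + 1),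
        (descPochhammer ℚ_[p] k).coeff m * (j : ℚ_[p]) ^ m *
          (if (p - 1) ∣ m then ((p - 1 : ℕ) : ℚ_[p]) else 0) = 0 := by
      intro m hm
      rw [mem_range] at hm
      rcases Nat.eq_zero_or_pos m with rfl | hm0
      · rw [hcoeff0, zero_mul, zero_mul]
      · rw [if_neg, mul_zero]
        intro hdvd
        have := Nat.le_of_dvd hm0 hdvd
        omega
    rw [Finset.sum_eq_zero hzero, zero_div]

end Aux3
section Aux4
variable {p : ℕ} [Fact p.Prime] (ζ : ℤ_[p])
  (hζ : ζ ^ (p - 1) = 1) (hord : orderOf ζ = p - 1)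

include hζ hord in
lemma sum_Epoly (hp : Odd p) (j : ℕ) :
    ∑ i ∈ range (p - 1), Epoly p ((j : ℚ_[p]) * (ζ : ℚ_[p]) ^ i)
      = C ((p - 1 : ℕ) : ℚ_[p])
        + C (((p - 1 : ℕ) : ℚ_[p]) * (j : ℚ_[p]) ^ (p - 1) / ((p - 1).factorial : ℚ_[p]))
          * X ^ (p - 1) := by
  have hp2 : 2 ≤ p := (Fact.out : p.Prime).two_le
  have heven : Even (p - 1) := Nat.Odd.sub_odd hp odd_one
  ext k
  rw [finset_sum_coeff]
  simp only [Epoly_coeff, coeff_add, coeff_C, coeff_C_mul, coeff_X_pow]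
  by_cases hk : k < p
  · simp only [if_pos hk, ← Finset.mul_sum]
    rw [sum_pbinom ζ hζ hord j (by omega)]
    rcases Nat.eq_zero_or_pos k with rfl | hk0
    · rw [pow_zero, one_mul, if_pos rfl, if_pos rfl,
        if_neg (by omega : ¬ (0 : ℕ) = p - 1), mul_zero, add_zero]
    · have hkne : k ≠ 0 := hk0.ne'
      rw [if_neg hkne, if_neg hkne, zero_add]
      by_cases hktop : k = p - 1
      · subst hktop
        rw [if_pos rfl, if_pos rfl, heven.neg_one_pow, one_mul, mul_one]
      · rw [if_neg hktop, if_neg hktop, mul_zero, mul_zero]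
  · have h1 : ∀ i ∈ range (p - 1),
        (if k < p then (-1 : ℚ_[p]) ^ k * pbinom p ((j : ℚ_[p]) * (ζ : ℚ_[p]) ^ i) k else 0) = 0 :=
      fun i _ => if_neg hk
    rw [Finset.sum_congr rfl h1, Finset.sum_const, smul_zero]
    rw [if_neg (by omega : k ≠ 0), if_neg (by omega : ¬ k = p - 1), mul_zero, add_zero]

set_option synthInstance.maxHeartbeats 1000000 in
include hζ hord in
lemma sum_mkE (hp : Odd p) (j : ℕ) :
    ∑ i ∈ range (p - 1), mkE p ((j : ℚ_[p]) * (ζ : ℚ_[p]) ^ i)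
      = ((p - 1 : ℕ) : ℚ_[p]) • (1 : TruncV p)
        + (((p - 1 : ℕ) : ℚ_[p]) * (j : ℚ_[p]) ^ (p - 1) / ((p - 1).factorial : ℚ_[p]))
            • (xV p) ^ (p - 1) := by
  have hsm : ∀ (a : ℚ_[p]) (f : (ℚ_[p])[X]), a • mkq p f = mkq p (a • f) := fun a f => rfl
  simp only [mkE]
  rw [← map_sum, sum_Epoly ζ hζ hord hp j, map_add]
  congr 1
  · rw [show (1 : TruncV p) = mkq p 1 from (map_one (mkq p)).symm, hsm]
    congr 1
    rw [smul_eq_C_mul, mul_one]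
  · rw [xV_eq, ← map_pow, hsm]
    congr 1
    rw [smul_eq_C_mul]

end Aux4
noncomputable def Nint (p n : ℕ) : ℤ :=
  ∑ m ∈ range (n + 1), (-1) ^ m * (n.choose m : ℤ) * (m : ℤ) ^ (p - 1)

section Aux5
variable {p : ℕ} [Fact p.Prime]

lemma Nint_mod {n : ℕ} (hn1 : 1 ≤ n) (hn2 : n ≤ p - 1) :
    ((Nint p n : ℤ) : ZMod p) = -1 := by
  have hp2 : 2 ≤ p := (Fact.out : p.Prime).two_le
  have hcast : ((Nint p n : ℤ) : ZMod p)
      = ∑ m ∈ range (n + 1), (-1 : ZMod p) ^ m * (n.choose m : ZMod p) * (m : ZMod p) ^ (p - 1) := by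
    rw [Nint]
    push_cast
    rfl
  rw [hcast, Finset.sum_range_succ']
  simp only [Nat.cast_zero, zero_pow (by omega : p - 1 ≠ 0), mul_zero, add_zero]
  have hone : ∀ i ∈ range n,
      (-1 : ZMod p) ^ (i + 1) * (n.choose (i + 1) : ZMod p) * ((i + 1 : ℕ) : ZMod p) ^ (p - 1)
        = (-1 : ZMod p) ^ (i + 1) * (n.choose (i + 1) : ZMod p) := by
    intro i hi
    rw [mem_range] at hi
    have hne : ((i + 1 : ℕ) : ZMod p) ≠ 0 := by
      rw [Ne, ZMod.natCast_eq_zero_iff]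
      intro hdvd
      have := Nat.le_of_dvd (by omega) hdvd
      omega
    rw [ZMod.pow_card_sub_one_eq_one hne, mul_one]
  rw [Finset.sum_congr rfl hone]
  have h := Int.alternating_sum_range_choose_of_ne (by omega : n ≠ 0)
  have h2 : (∑ m ∈ range (n + 1), (-1 : ZMod p) ^ m * (n.choose m : ZMod p)) = 0 := by
    have h3 := congrArg (fun z : ℤ => (z : ZMod p)) h
    push_cast at h3
    exact h3
  rw [Finset.sum_range_succ'] at h2
  simp only [pow_zero, Nat.choose_zero_right, Nat.cast_one, one_mul] at h2
  linear_combination h2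

end Aux5
set_option maxHeartbeats 1000000 in
set_option synthInstance.maxHeartbeats 1000000 in
/-- For `1 ≤ n ≤ p-1`, the coefficient `c` of `x^{p-1}` in `Σ_{i=0}^{p-2} s_i^n` lies in
`ℤ_p` and is congruent to `-1 (mod p)`, i.e. `|c + 1|_p ≤ 1/p`. -/
theorem sum_pow_top_coeff (p : ℕ) [Fact p.Prime] (hp : Odd p) (ζ : ℤ_[p])
    (hζ : ζ ^ (p - 1) = 1) (hord : orderOf ζ = p - 1)
    (n : ℕ) (hn1 : 1 ≤ n) (hn2 : n ≤ p - 1) :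
    ∃ c : ℚ_[p],
      (∑ i ∈ Finset.range (p - 1), (sElt p ζ i) ^ n = c • xV p ^ (p - 1)) ∧
      ‖c‖ ≤ 1 ∧ ‖c + 1‖ ≤ (p : ℝ)⁻¹ := by
  have hp2 : 2 ≤ p := (Fact.out : p.Prime).two_le
  set num : ℤ := ((p - 1 : ℕ) : ℤ) * Nint p n with hnum
  set den : ℤ := (((p - 1).factorial : ℕ) : ℤ) with hden
  set c : ℚ_[p] := ((num : ℤ) : ℚ_[p]) / ((den : ℤ) : ℚ_[p]) with hc
  have hdennorm : ‖((den : ℤ) : ℚ_[p])‖ = 1 := by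
    refine le_antisymm (Padic.norm_int_le_one _) (not_lt.mp ?_)
    rw [Padic.norm_intCast_lt_one_iff]
    rw [hden, Int.natCast_dvd_natCast]
    intro hdvd
    have := ((Fact.out : p.Prime).dvd_factorial).mp hdvd
    omega
  have hdenne : ((den : ℤ) : ℚ_[p]) ≠ 0 := by
    intro h
    rw [h, norm_zero] at hdennorm
    norm_num at hdennorm
  refine ⟨c, ?_, ?_, ?_⟩
  · -- main identity
    have hexp : ∀ i ∈ range (p - 1), (sElt p ζ i) ^ n
        = ∑ m ∈ range (n + 1), ((-1 : ℚ_[p]) ^ m * (n.choose m : ℚ_[p]))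
            • mkE p ((m : ℚ_[p]) * (ζ : ℚ_[p]) ^ i) := by
      intro i _
      rw [sElt_eq, sub_eq_add_neg, add_comm, add_pow]
      refine Finset.sum_congr rfl fun m _ => ?_
      rw [one_pow, mul_one, neg_pow (mkE p ((ζ : ℚ_[p]) ^ i)) m, mkE_pow, mkE,
        show ((-1 : TruncV p) ^ m) = mkq p ((-1 : (ℚ_[p])[X]) ^ m) by
          rw [map_pow, map_neg, map_one],
        show ((n.choose m : ℕ) : TruncV p) = mkq p ((n.choose m : ℕ) : (ℚ_[p])[X]) from
          (map_natCast (mkq p) _).symm,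
        ← map_mul, ← map_mul,
        show ∀ (a : ℚ_[p]) (f : (ℚ_[p])[X]), a • mkq p f = mkq p (a • f) from fun a f => rfl]
      congr 1
      rw [smul_eq_C_mul, C_mul, map_pow, map_neg, map_one, map_natCast]
      ring
    rw [Finset.sum_congr rfl hexp, Finset.sum_comm]
    have hQ : ∀ m ∈ range (n + 1),
        (∑ i ∈ range (p - 1), ((-1 : ℚ_[p]) ^ m * (n.choose m : ℚ_[p]))
            • mkE p ((m : ℚ_[p]) * (ζ : ℚ_[p]) ^ i))
        = ((-1 : ℚ_[p]) ^ m * (n.choose m : ℚ_[p]))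
            • (((p - 1 : ℕ) : ℚ_[p]) • (1 : TruncV p)
              + (((p - 1 : ℕ) : ℚ_[p]) * (m : ℚ_[p]) ^ (p - 1)
                  / ((p - 1).factorial : ℚ_[p])) • (xV p) ^ (p - 1)) := by
      intro m _
      rw [← Finset.smul_sum, sum_mkE ζ hζ hord hp m]
    rw [Finset.sum_congr rfl hQ]
    simp only [smul_add, smul_smul]
    rw [Finset.sum_add_distrib, ← Finset.sum_smul, ← Finset.sum_smul]
    have hz : (∑ m ∈ range (n + 1),
        ((-1 : ℚ_[p]) ^ m * (n.choose m : ℚ_[p])) * ((p - 1 : ℕ) : ℚ_[p])) = 0 := by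
      rw [← Finset.sum_mul]
      have h := Int.alternating_sum_range_choose_of_ne (by omega : n ≠ 0)
      have h3 := congrArg (fun z : ℤ => (z : ℚ_[p])) h
      push_cast at h3
      rw [h3, zero_mul]
    rw [hz, zero_smul, zero_add]
    congr 1
    have hN : ((Nint p n : ℤ) : ℚ_[p])
        = ∑ m ∈ range (n + 1), (-1 : ℚ_[p]) ^ m * (n.choose m : ℚ_[p]) * (m : ℚ_[p]) ^ (p - 1) := by
      rw [Nint]; push_cast; rfl
    rw [hc, hnum]
    push_cast
    rw [hN, Finset.mul_sum, Finset.sum_div]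
    refine Finset.sum_congr rfl fun m _ => ?_
    rw [hden]
    push_cast
    ring
  · rw [hc, norm_div, hdennorm, div_one]
    exact Padic.norm_int_le_one _
  · have hc1 : c + 1 = (((num + den : ℤ) : ℚ_[p])) / ((den : ℤ) : ℚ_[p]) := by
      rw [hc]
      field_simp
      rw [Int.cast_add]
    rw [hc1, norm_div, hdennorm, div_one]
    have hdvd : (p : ℤ) ∣ (num + den) := by
      rw [← ZMod.intCast_zmod_eq_zero_iff_dvd]
      have h1 : ((p - 1 : ℕ) : ZMod p) = -1 := by
        rw [Nat.cast_sub (by omega : 1 ≤ p), ZMod.natCast_self, Nat.cast_one, zero_sub]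
      rw [hnum, hden]
      push_cast
      rw [Nint_mod hn1 hn2, h1, ZMod.wilsons_lemma]
      ring
    have := (Padic.norm_int_le_pow_iff_dvd (num + den) 1).mpr (by simpa using hdvd)
    simpa using this
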